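/- For each ν ∈ (0,1) there exist δ = δ(ν) ∈ (0,1) and C_R = C_R(ν) ≥ 1 such that the following holds. Let 0 < α_0 ≤ 1 and let Ω ⊆ ℝ be ν-porous on scales α_0 to 1. Then there exists a set X ⊆ ℝ which is δ-regular with constant C_R on scales 0 to 1 and such that Ω ⊆ X(α_0), where X(α_0) = X + [−α_0, α_0] is the closed α_0-neighborhood of X. -/

import Mathlib

set_option linter.unusedSectionVars false


open MeasureTheory

/-- `Ω ⊆ ℝ` is `ν`-porous on scales `α₀` to `α₁`: for every closed interval `I = [a, b]`
with `α₀ ≤ |I| ≤ α₁` there is a closed subinterval `J ⊆ I` with `|J| = ν * |I|`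
and `J ∩ Ω = ∅`. -/
def IsPorous (ν α₀ α₁ : ℝ) (Ω : Set ℝ) : Prop :=
  ∀ a b : ℝ, α₀ ≤ b - a → b - a ≤ α₁ →
    ∃ c : ℝ, a ≤ c ∧ c + ν * (b - a) ≤ b ∧
      Set.Icc c (c + ν * (b - a)) ∩ Ω = ∅

/-- `X ⊆ ℝ` is `δ`-regular with constant `C` on scales `α₀` to `α₁`: `X` is closed and
nonempty, and there is a Borel measure `μ` supported on `X` with
`μ I ≤ C * |I| ^ δ` for every interval `I` with `α₀ ≤ |I| ≤ α₁` and
`μ I ≥ C⁻¹ * |I| ^ δ` for every such interval centered at a point of `X`. -/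
def IsADRegular (δ C α₀ α₁ : ℝ) (X : Set ℝ) : Prop :=
  IsClosed X ∧ X.Nonempty ∧
    ∃ μ : Measure ℝ,
      μ Xᶜ = 0 ∧
      (∀ a b : ℝ, α₀ ≤ b - a → b - a ≤ α₁ →
        μ (Set.Icc a b) ≤ ENNReal.ofReal (C * (b - a) ^ δ)) ∧
      (∀ x ∈ X, ∀ a b : ℝ, x = (a + b) / 2 → α₀ ≤ b - a → b - a ≤ α₁ →
        ENNReal.ofReal (C⁻¹ * (b - a) ^ δ) ≤ μ (Set.Icc a b))

namespace Porous43

attribute [local instance] Classical.propDecidable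

variable (M : ℕ) (G : ℕ → ℤ → ℤ)

def keep : ℕ → ℤ → Prop
  | 0, _ => True
  | j+1, m => keep j (m / (M:ℤ)) ∧ m ≠ G j (m / (M:ℤ))

noncomputable def lp (j : ℕ) : ℝ := ((M:ℝ)^j)⁻¹

noncomputable def cell (j : ℕ) (k : ℤ) : Set ℝ := Set.Icc ((k:ℝ) * lp M j) ((k+1) * lp M j)
noncomputable def cellO (j : ℕ) (k : ℤ) : Set ℝ := Set.Ico ((k:ℝ) * lp M j) ((k+1) * lp M j)

noncomputable def Cs (j : ℕ) : Set ℝ := ⋃ k : ℤ, ⋃ _ : keep M G j k, cell M j k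
noncomputable def CsO (j : ℕ) : Set ℝ := ⋃ k : ℤ, ⋃ _ : keep M G j k, cellO M j k

noncomputable def cnn (n : ℕ) : ℝ := ((M:ℝ)/((M:ℝ)-1))^n
noncomputable def bb (n : ℕ) : ℝ := (((M:ℝ)-1)^n)⁻¹

noncomputable def Fn (n : ℕ) (x : ℝ) : ℝ :=
  cnn M n * ((volume (CsO M G n ∩ Set.Ico 0 x)).toReal - (volume (CsO M G n ∩ Set.Ico x 0)).toReal)

section basic
variable {M : ℕ} (hM : 3 ≤ M)
include hM

lemma Mr3 : (3:ℝ) ≤ (M:ℝ) := by exact_mod_cast hM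
lemma M_pos : (0:ℝ) < M := by have := Mr3 hM; linarith
lemma M1_pos : (0:ℝ) < (M:ℝ) - 1 := by have := Mr3 hM; linarith
lemma lp_pos (j : ℕ) : 0 < lp M j := by
  have := M_pos hM; unfold lp; positivity
omit hM in
lemma lp_zero : lp M 0 = 1 := by simp [lp]
lemma lp_succ (j : ℕ) : (M:ℝ) * lp M (j+1) = lp M j := by
  have := M_pos hM
  unfold lp
  rw [pow_succ]
  field_simp
lemma lp_anti {i j : ℕ} (h : i ≤ j) : lp M j ≤ lp M i := by
  have h1 := M_pos hM
  unfold lp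
  apply inv_anti₀ (by positivity)
  apply pow_le_pow_right₀ (by linarith [Mr3 hM]) h
lemma lp_le_one (j : ℕ) : lp M j ≤ 1 := by
  have h := lp_anti hM (Nat.zero_le j)
  rwa [lp_zero] at h
lemma cnn_pos (n : ℕ) : 0 < cnn M n := by
  have := M_pos hM; have := M1_pos hM; unfold cnn; positivity
lemma bb_pos (n : ℕ) : 0 < bb M n := by
  have := M1_pos hM; unfold bb; positivity
lemma mass_eq (j m : ℕ) : cnn M (j+m) * (((M:ℝ)-1)^m * lp M (j+m)) = bb M j := by
  have h1 := M_pos hM; have h2 := M1_pos hM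
  unfold cnn bb lp
  rw [div_pow]
  field_simp
  rw [pow_add]
  ring
end basic

lemma lp_nonneg (M j : ℕ) : 0 ≤ lp M j := by unfold lp; positivity

lemma cellO_disjoint {M : ℕ} {j : ℕ} {k k' : ℤ} (h : k ≠ k') :
    Disjoint (cellO M j k) (cellO M j k') := by
  apply Set.Ico_disjoint_Ico.2
  rcases lt_or_gt_of_ne h with h' | h'
  · have hc : ((k:ℝ)+1) ≤ (k':ℝ) := by exact_mod_cast h'
    have : ((k:ℝ)+1) * lp M j ≤ (k':ℝ) * lp M j :=
      mul_le_mul_of_nonneg_right hc (lp_nonneg M j)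
    exact le_trans (min_le_left _ _) (le_trans this (le_max_right _ _))
  · have hc : ((k':ℝ)+1) ≤ (k:ℝ) := by exact_mod_cast h'
    have : ((k':ℝ)+1) * lp M j ≤ (k:ℝ) * lp M j :=
      mul_le_mul_of_nonneg_right hc (lp_nonneg M j)
    exact le_trans (min_le_right _ _) (le_trans this (le_max_left _ _))

lemma measurable_CsO (j : ℕ) : MeasurableSet (CsO M G j) := by
  apply MeasurableSet.iUnion
  intro k
  exact MeasurableSet.iUnion fun _ => measurableSet_Ico

lemma volume_cellO (j : ℕ) (k : ℤ) : volume (cellO M j k) = ENNReal.ofReal (lp M j) := by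
  rw [cellO, Real.volume_Ico]
  congr 1
  ring

lemma vol_inter_lt_top (s : Set ℝ) {a b : ℝ} : volume (s ∩ Set.Ico a b) < ⊤ :=
  lt_of_le_of_lt (measure_mono Set.inter_subset_right)
    (by rw [Real.volume_Ico]; exact ENNReal.ofReal_lt_top)

/-- grid tiling of an `Ico` block by generation-`n` cells -/
lemma Ico_grid_eq {M : ℕ} (hM : 3 ≤ M) (n : ℕ) (k k' : ℤ) :
    Set.Ico ((k:ℝ) * lp M n) ((k':ℝ) * lp M n) = ⋃ i ∈ Finset.Ico k k', cellO M n i := by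
  have hL := lp_pos hM n
  ext x
  simp only [Set.mem_Ico, Set.mem_iUnion, Finset.mem_Ico, cellO, exists_prop]
  constructor
  · rintro ⟨h1, h2⟩
    refine ⟨⌊x / lp M n⌋, ⟨?_, ?_⟩, ?_, ?_⟩
    · apply Int.le_floor.2
      rw [le_div_iff₀ hL]
      linarith
    · have hfl : (⌊x / lp M n⌋ : ℝ) ≤ x / lp M n := Int.floor_le _
      have : x / lp M n < (k' : ℝ) := by
        rw [div_lt_iff₀ hL]
        linarith
      exact_mod_cast lt_of_le_of_lt hfl this
    · calc (⌊x / lp M n⌋ : ℝ) * lp M n ≤ (x / lp M n) * lp M n :=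
            mul_le_mul_of_nonneg_right (Int.floor_le _) hL.le
        _ = x := by field_simp
    · have : x / lp M n < (⌊x / lp M n⌋ : ℝ) + 1 := Int.lt_floor_add_one _
      calc x = (x / lp M n) * lp M n := by field_simp
        _ < ((⌊x / lp M n⌋ : ℝ) + 1) * lp M n := by
            apply mul_lt_mul_of_pos_right this hL
  · rintro ⟨i, ⟨hi1, hi2⟩, h1, h2⟩
    constructor
    · calc (k:ℝ) * lp M n ≤ (i:ℝ) * lp M n :=
            mul_le_mul_of_nonneg_right (by exact_mod_cast hi1) hL.le
        _ ≤ x := h1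
    · have : ((i:ℝ) + 1) ≤ (k' : ℝ) := by exact_mod_cast hi2
      calc x < ((i:ℝ)+1) * lp M n := h2
        _ ≤ (k':ℝ) * lp M n := mul_le_mul_of_nonneg_right this hL.le

lemma ediv_eq_of_between {M : ℕ} (hM : 3 ≤ M) {k i : ℤ} (h1 : M * k ≤ i) (h2 : i < M * k + M) :
    i / (M:ℤ) = k := by
  have hM0 : (0:ℤ) < (M:ℤ) := by exact_mod_cast Nat.lt_of_lt_of_le (by norm_num) hM
  have h3 : i = (i - M * k) + M * k := by ring
  rw [h3, Int.add_mul_ediv_left _ _ (ne_of_gt hM0),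
    Int.ediv_eq_zero_of_lt (by omega) (by omega), zero_add]

lemma keep_succ_iff {i : ℤ} {j : ℕ} (hM : 3 ≤ M) {k : ℤ} (h1 : M * k ≤ i) (h2 : i < M * k + M) :
    keep M G (j+1) i ↔ (keep M G j k ∧ i ≠ G j k) := by
  rw [keep, ediv_eq_of_between hM h1 h2]

/-- the main volume computation -/
lemma vol_CsO_cellO {M : ℕ} {G : ℕ → ℤ → ℤ} (hM : 3 ≤ M) (hG : ∀ j k, (G j k) / (M:ℤ) = k)
    (m : ℕ) : ∀ (j : ℕ) (k : ℤ),
    volume (CsO M G (j+m) ∩ cellO M j k)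
      = if keep M G j k then ENNReal.ofReal (((M:ℝ)-1)^m * lp M (j+m)) else 0 := by
  induction m with
  | zero =>
    intro j k
    rw [Nat.add_zero]
    by_cases hk : keep M G j k
    · rw [if_pos hk]
      have : CsO M G j ∩ cellO M j k = cellO M j k := by
        apply Set.inter_eq_self_of_subset_right
        exact Set.subset_iUnion₂ (s := fun k _ => cellO M j k) k hk
      rw [this, volume_cellO]
      simp
    · rw [if_neg hk]
      have : CsO M G j ∩ cellO M j k = ∅ := by
        apply Set.eq_empty_of_forall_notMem
        rintro x ⟨hx1, hx2⟩
        rw [CsO, Set.mem_iUnion] at hx1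
        obtain ⟨k', hk'⟩ := hx1
        rw [Set.mem_iUnion] at hk'
        obtain ⟨hkp, hxc⟩ := hk'
        rcases eq_or_ne k' k with rfl | hne
        · exact hk hkp
        · exact (cellO_disjoint hne).le_bot ⟨hxc, hx2⟩
      rw [this]
      simp
  | succ m ih =>
    intro j k
    have hA : j + (m+1) = (j+1) + m := by omega
    rw [hA]
    have hL := lp_pos hM (j+1)
    have hMz : (0:ℤ) < (M:ℤ) := by exact_mod_cast Nat.lt_of_lt_of_le (by norm_num) hM
    have htile : cellO M j k = ⋃ i ∈ Finset.Ico (M*k : ℤ) (M*k+M), cellO M (j+1) i := by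
      have h1 : ((M*k : ℤ) : ℝ) * lp M (j+1) = (k:ℝ) * lp M j := by
        push_cast
        rw [← lp_succ hM j]
        ring
      have h2 : ((M*k+M : ℤ) : ℝ) * lp M (j+1) = ((k:ℝ)+1) * lp M j := by
        push_cast
        rw [← lp_succ hM j]
        ring
      rw [cellO, ← h1, ← h2, Ico_grid_eq hM]
    rw [htile, Set.inter_iUnion₂]
    rw [measure_biUnion_finset ?hd ?hm]
    case hd =>
      intro i _ i' _ hne
      exact Disjoint.mono Set.inter_subset_right Set.inter_subset_right (cellO_disjoint hne)
    case hm =>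
      intro i _
      exact (measurable_CsO M G _).inter measurableSet_Ico
    have hterm : ∀ i ∈ Finset.Ico (M*k : ℤ) (M*k+M),
        volume (CsO M G ((j+1)+m) ∩ cellO M (j+1) i)
          = if (keep M G j k ∧ i ≠ G j k) then ENNReal.ofReal (((M:ℝ)-1)^m * lp M ((j+1)+m)) else 0 := by
      intro i hi
      rw [Finset.mem_Ico] at hi
      rw [ih (j+1) i]
      congr 1
      rw [eq_iff_iff]
      exact keep_succ_iff M G hM hi.1 hi.2
    rw [Finset.sum_congr rfl hterm]
    by_cases hk : keep M G j k
    · rw [if_pos hk]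
      have hGmem : G j k ∈ Finset.Ico (M*k : ℤ) (M*k+M) := by
        have hdm := Int.mul_ediv_add_emod (G j k) (M:ℤ)
        rw [hG j k] at hdm
        have h1 := Int.emod_nonneg (G j k) (ne_of_gt hMz)
        have h2 := Int.emod_lt_of_pos (G j k) hMz
        rw [Finset.mem_Ico]
        omega
      rw [← Finset.sum_erase_add _ _ hGmem]
      have : (if (keep M G j k ∧ G j k ≠ G j k) then ENNReal.ofReal (((M:ℝ)-1)^m * lp M ((j+1)+m)) else 0) = 0 := by
        simp
      rw [this, add_zero]
      have hconst : ∀ i ∈ (Finset.Ico (M*k : ℤ) (M*k+M)).erase (G j k),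
          (if (keep M G j k ∧ i ≠ G j k) then ENNReal.ofReal (((M:ℝ)-1)^m * lp M ((j+1)+m)) else 0)
            = ENNReal.ofReal (((M:ℝ)-1)^m * lp M ((j+1)+m)) := by
        intro i hi
        rw [if_pos ⟨hk, Finset.ne_of_mem_erase hi⟩]
      rw [Finset.sum_congr rfl hconst, Finset.sum_const]
      have hcard : ((Finset.Ico (M*k : ℤ) (M*k+M)).erase (G j k)).card = M - 1 := by
        rw [Finset.card_erase_of_mem hGmem, Int.card_Ico]
        simp only [add_sub_cancel_left]
        rfl
      rw [hcard, nsmul_eq_mul, ← ENNReal.ofReal_natCast (M-1),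
        ← ENNReal.ofReal_mul (by positivity)]
      congr 1
      have hM1 : ((M - 1 : ℕ) : ℝ) = (M:ℝ) - 1 := by
        have : (1:ℕ) ≤ M := by omega
        push_cast [this]
        ring
      rw [hM1, pow_succ]
      ring
    · have hall : ∀ i ∈ Finset.Ico (M*k : ℤ) (M*k+M),
          (if (keep M G j k ∧ i ≠ G j k) then ENNReal.ofReal (((M:ℝ)-1)^m * lp M ((j+1)+m)) else 0) = 0 := by
        intro i _
        rw [if_neg (fun h => hk h.1)]
      rw [Finset.sum_congr rfl hall, Finset.sum_const, smul_zero, if_neg hk]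

lemma vol_split (M : ℕ) (G : ℕ → ℤ → ℤ) (n : ℕ) {a b c : ℝ} (h1 : a ≤ b) (h2 : b ≤ c) :
    volume (CsO M G n ∩ Set.Ico a c)
      = volume (CsO M G n ∩ Set.Ico a b) + volume (CsO M G n ∩ Set.Ico b c) := by
  rw [← Set.Ico_union_Ico_eq_Ico h1 h2, Set.inter_union_distrib_left,
    measure_union (Disjoint.mono Set.inter_subset_right Set.inter_subset_right
      Set.Ico_disjoint_Ico_same) ((measurable_CsO M G n).inter measurableSet_Ico)]

lemma Fn_sub {M : ℕ} (G : ℕ → ℤ → ℤ) (n : ℕ) {a b : ℝ} (h : a ≤ b) :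
    Fn M G n b - Fn M G n a = cnn M n * (volume (CsO M G n ∩ Set.Ico a b)).toReal := by
  have fin : ∀ u v : ℝ, (volume (CsO M G n ∩ Set.Ico u v)).toReal
      = (volume (CsO M G n ∩ Set.Ico u v)).toReal := fun _ _ => rfl
  unfold Fn
  rcases le_or_gt 0 a with h0a | h0a
  · have e1 : Set.Ico a (0:ℝ) = ∅ := Set.Ico_eq_empty (by linarith)
    have e2 : Set.Ico b (0:ℝ) = ∅ := Set.Ico_eq_empty (by linarith)
    have hs := vol_split M G (n := n) h0a h
    have hs' : (volume (CsO M G n ∩ Set.Ico 0 b)).toReal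
        = (volume (CsO M G n ∩ Set.Ico 0 a)).toReal
          + (volume (CsO M G n ∩ Set.Ico a b)).toReal := by
      rw [hs, ENNReal.toReal_add (vol_inter_lt_top _).ne (vol_inter_lt_top _).ne]
    rw [e1, e2]
    simp only [Set.inter_empty, measure_empty, ENNReal.toReal_zero, sub_zero]
    rw [hs']
    ring
  · rcases le_or_gt b 0 with hb | hb
    · have e1 : Set.Ico (0:ℝ) a = ∅ := Set.Ico_eq_empty (by linarith)
      have e2 : Set.Ico (0:ℝ) b = ∅ := Set.Ico_eq_empty (by linarith)
      have hs := vol_split M G (n := n) h hb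
      have hs' : (volume (CsO M G n ∩ Set.Ico a 0)).toReal
          = (volume (CsO M G n ∩ Set.Ico a b)).toReal
            + (volume (CsO M G n ∩ Set.Ico b 0)).toReal := by
        rw [hs, ENNReal.toReal_add (vol_inter_lt_top _).ne (vol_inter_lt_top _).ne]
      rw [e1, e2]
      simp only [Set.inter_empty, measure_empty, ENNReal.toReal_zero, zero_sub]
      rw [hs']
      ring
    · have e1 : Set.Ico (0:ℝ) a = ∅ := Set.Ico_eq_empty (by linarith)
      have e2 : Set.Ico b (0:ℝ) = ∅ := Set.Ico_eq_empty (by linarith)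
      have hs := vol_split M G (n := n) h0a.le hb.le
      have hs' : (volume (CsO M G n ∩ Set.Ico a b)).toReal
          = (volume (CsO M G n ∩ Set.Ico a 0)).toReal
            + (volume (CsO M G n ∩ Set.Ico 0 b)).toReal := by
        rw [hs, ENNReal.toReal_add (vol_inter_lt_top _).ne (vol_inter_lt_top _).ne]
      rw [e1, e2]
      simp only [Set.inter_empty, measure_empty, ENNReal.toReal_zero, sub_zero]
      rw [hs']
      ring

lemma Fn_zero {M : ℕ} (G : ℕ → ℤ → ℤ) (n : ℕ) : Fn M G n 0 = 0 := by
  unfold Fn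
  simp

lemma Fn_grid_sum {M : ℕ} {G : ℕ → ℤ → ℤ} (hM : 3 ≤ M) (hG : ∀ j k, (G j k) / (M:ℤ) = k)
    (n m : ℕ) (k k' : ℤ) (h : k ≤ k') :
    Fn M G (n+m) ((k':ℝ) * lp M n) - Fn M G (n+m) ((k:ℝ) * lp M n)
      = ∑ i ∈ Finset.Ico k k', (if keep M G n i then bb M n else 0) := by
  have hkk : (k:ℝ) * lp M n ≤ (k':ℝ) * lp M n :=
    mul_le_mul_of_nonneg_right (by exact_mod_cast h) (lp_nonneg M n)
  rw [Fn_sub G (n+m) hkk, Ico_grid_eq hM n k k', Set.inter_iUnion₂,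
    measure_biUnion_finset
      (fun i _ i' _ hne => Disjoint.mono Set.inter_subset_right Set.inter_subset_right
        (cellO_disjoint hne))
      (fun i _ => (measurable_CsO M G _).inter measurableSet_Ico)]
  have hterm : ∀ i ∈ Finset.Ico k k',
      volume (CsO M G (n+m) ∩ cellO M n i)
        = if keep M G n i then ENNReal.ofReal (((M:ℝ)-1)^m * lp M (n+m)) else 0 :=
    fun i _ => vol_CsO_cellO hM hG m n i
  rw [Finset.sum_congr rfl hterm, ENNReal.toReal_sum
    (fun i _ => by split <;> simp), Finset.mul_sum]
  apply Finset.sum_congr rfl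
  intro i _
  split
  · rw [ENNReal.toReal_ofReal
      (mul_nonneg (pow_nonneg (by linarith [M1_pos hM]) _) (lp_nonneg M (n+m))), mass_eq hM n m]
  · simp

lemma Fn_grid_stable {M : ℕ} {G : ℕ → ℤ → ℤ} (hM : 3 ≤ M) (hG : ∀ j k, (G j k) / (M:ℤ) = k)
    (n m : ℕ) (k : ℤ) :
    Fn M G (n+m) ((k:ℝ) * lp M n) = Fn M G n ((k:ℝ) * lp M n) := by
  have z : ((0:ℤ):ℝ) * lp M n = 0 := by norm_num
  rcases le_total 0 k with hk | hk
  · have h1 := Fn_grid_sum hM hG n m 0 k hk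
    have h2 := Fn_grid_sum hM hG n 0 0 k hk
    rw [Nat.add_zero] at h2
    rw [z, Fn_zero, sub_zero] at h1 h2
    rw [h1, h2]
  · have h1 := Fn_grid_sum hM hG n m k 0 hk
    have h2 := Fn_grid_sum hM hG n 0 k 0 hk
    rw [Nat.add_zero] at h2
    rw [z, Fn_zero, zero_sub] at h1 h2
    have := h1.trans h2.symm
    linarith

lemma Fn_window {M : ℕ} {G : ℕ → ℤ → ℤ} (hM : 3 ≤ M) (hG : ∀ j k, (G j k) / (M:ℤ) = k)
    {j n : ℕ} (hjn : j ≤ n) {a b : ℝ} (hab : a ≤ b) (hlen : b - a ≤ lp M j) :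
    Fn M G n b - Fn M G n a ≤ 2 * bb M j := by
  obtain ⟨m, rfl⟩ : ∃ m, n = j + m := ⟨n - j, by omega⟩
  have hL := lp_pos hM j
  have hnn : (0:ℝ) ≤ ((M:ℝ)-1)^m * lp M (j+m) :=
    mul_nonneg (pow_nonneg (by linarith [M1_pos hM]) _) (lp_nonneg M (j+m))
  set k := ⌊a / lp M j⌋ with hk
  have hka : (k:ℝ) * lp M j ≤ a := by
    calc (k:ℝ) * lp M j ≤ (a / lp M j) * lp M j :=
          mul_le_mul_of_nonneg_right (Int.floor_le _) hL.le
      _ = a := by field_simp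
  have hkb : b < ((k:ℝ)+2) * lp M j := by
    have h1 : a / lp M j < (k:ℝ) + 1 := Int.lt_floor_add_one _
    have h2 : a < ((k:ℝ)+1) * lp M j := by
      calc a = (a / lp M j) * lp M j := by field_simp
        _ < ((k:ℝ)+1) * lp M j := mul_lt_mul_of_pos_right h1 hL
    nlinarith
  have hsub : Set.Ico a b ⊆ cellO M j k ∪ cellO M j (k+1) := by
    rintro x ⟨hx1, hx2⟩
    by_cases hxk : x < ((k:ℝ)+1) * lp M j
    · left; exact ⟨by linarith, hxk⟩
    · right
      push_neg at hxk
      refine ⟨by push_cast; linarith, by push_cast; linarith⟩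
  rw [Fn_sub G (j+m) hab]
  have hvol : volume (CsO M G (j+m) ∩ Set.Ico a b)
      ≤ ENNReal.ofReal (((M:ℝ)-1)^m * lp M (j+m)) + ENNReal.ofReal (((M:ℝ)-1)^m * lp M (j+m)) := by
    calc volume (CsO M G (j+m) ∩ Set.Ico a b)
        ≤ volume ((CsO M G (j+m) ∩ cellO M j k) ∪ (CsO M G (j+m) ∩ cellO M j (k+1))) := by
          apply measure_mono
          rw [← Set.inter_union_distrib_left]
          exact Set.inter_subset_inter_right _ hsub
      _ ≤ volume (CsO M G (j+m) ∩ cellO M j k) + volume (CsO M G (j+m) ∩ cellO M j (k+1)) :=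
          measure_union_le _ _
      _ ≤ _ := by
          gcongr
          · rw [vol_CsO_cellO hM hG m j k]
            split
            · exact le_refl _
            · exact zero_le
          · rw [vol_CsO_cellO hM hG m j (k+1)]
            split
            · exact le_refl _
            · exact zero_le
  have htr : (volume (CsO M G (j+m) ∩ Set.Ico a b)).toReal ≤ 2 * (((M:ℝ)-1)^m * lp M (j+m)) := by
    have h2 := ENNReal.toReal_mono (by simp) hvol
    rw [← ENNReal.ofReal_add hnn hnn, ENNReal.toReal_ofReal (by linarith)] at h2
    linarith
  have hcn := cnn_pos hM (j+m)
  calc cnn M (j+m) * (volume (CsO M G (j+m) ∩ Set.Ico a b)).toReal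
      ≤ cnn M (j+m) * (2 * (((M:ℝ)-1)^m * lp M (j+m))) :=
        mul_le_mul_of_nonneg_left htr hcn.le
    _ = 2 * bb M j := by
        rw [← mass_eq hM j m]
        ring

lemma Fn_lower {M : ℕ} {G : ℕ → ℤ → ℤ} (hM : 3 ≤ M) (hG : ∀ j k, (G j k) / (M:ℤ) = k)
    {j n : ℕ} (hjn : j ≤ n) {k : ℤ} {a b : ℝ} (hk : keep M G j k)
    (hsub : cellO M j k ⊆ Set.Ico a b) (hab : a ≤ b) :
    bb M j ≤ Fn M G n b - Fn M G n a := by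
  obtain ⟨m, rfl⟩ : ∃ m, n = j + m := ⟨n - j, by omega⟩
  have hnn : (0:ℝ) ≤ ((M:ℝ)-1)^m * lp M (j+m) :=
    mul_nonneg (pow_nonneg (by linarith [M1_pos hM]) _) (lp_nonneg M (j+m))
  rw [Fn_sub G (j+m) hab]
  have hvol : ENNReal.ofReal (((M:ℝ)-1)^m * lp M (j+m))
      ≤ volume (CsO M G (j+m) ∩ Set.Ico a b) := by
    calc ENNReal.ofReal (((M:ℝ)-1)^m * lp M (j+m))
        = volume (CsO M G (j+m) ∩ cellO M j k) := by
          rw [vol_CsO_cellO hM hG m j k, if_pos hk]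
      _ ≤ _ := measure_mono (Set.inter_subset_inter_right _ hsub)
  have htr : (((M:ℝ)-1)^m * lp M (j+m)) ≤ (volume (CsO M G (j+m) ∩ Set.Ico a b)).toReal := by
    have h2 := ENNReal.toReal_mono (vol_inter_lt_top _).ne hvol
    rwa [ENNReal.toReal_ofReal hnn] at h2
  have hcn := cnn_pos hM (j+m)
  calc bb M j = cnn M (j+m) * (((M:ℝ)-1)^m * lp M (j+m)) := (mass_eq hM j m).symm
    _ ≤ cnn M (j+m) * (volume (CsO M G (j+m) ∩ Set.Ico a b)).toReal :=
        mul_le_mul_of_nonneg_left htr hcn.le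

lemma bb_eq_pow {M : ℕ} (n : ℕ) : bb M n = (((M:ℝ)-1)⁻¹)^n := by
  rw [bb, inv_pow]

lemma exists_F {M : ℕ} {G : ℕ → ℤ → ℤ} (hM : 3 ≤ M) (hG : ∀ j k, (G j k) / (M:ℤ) = k) :
    ∃ F : ℝ → ℝ, ∀ x, Filter.Tendsto (fun n => Fn M G n x) Filter.atTop (nhds (F x)) := by
  have key : ∀ x : ℝ, ∃ L : ℝ, Filter.Tendsto (fun n => Fn M G n x) Filter.atTop (nhds L) := by
    intro x
    have hr0 : (0:ℝ) ≤ ((M:ℝ)-1)⁻¹ := by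
      have := M1_pos hM; positivity
    have hr1 : ((M:ℝ)-1)⁻¹ < 1 := by
      rw [inv_lt_one_iff₀]
      right; linarith [Mr3 hM]
    have hc : CauchySeq (fun n => Fn M G n x) := by
      apply cauchySeq_of_le_geometric (((M:ℝ)-1)⁻¹) 2 hr1
      intro n
      have hL := lp_pos hM n
      set k := ⌊x / lp M n⌋ with hk
      set g := (k:ℝ) * lp M n with hg
      have hga : g ≤ x := by
        calc (k:ℝ) * lp M n ≤ (x / lp M n) * lp M n :=
              mul_le_mul_of_nonneg_right (Int.floor_le _) hL.le
          _ = x := by field_simp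
      have hxg : x - g ≤ lp M n := by
        have h1 : x / lp M n < (k:ℝ) + 1 := Int.lt_floor_add_one _
        have h2 : x < ((k:ℝ)+1) * lp M n := by
          calc x = (x / lp M n) * lp M n := by field_simp
            _ < ((k:ℝ)+1) * lp M n := mul_lt_mul_of_pos_right h1 hL
        rw [hg]; nlinarith
      have w1 : Fn M G n x - Fn M G n g ≤ 2 * bb M n := Fn_window hM hG le_rfl hga hxg
      have w2 : Fn M G (n+1) x - Fn M G (n+1) g ≤ 2 * bb M n :=
        Fn_window hM hG (Nat.le_succ n) hga hxg
      have p1 : 0 ≤ Fn M G n x - Fn M G n g := by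
        rw [Fn_sub G n hga]
        exact mul_nonneg (cnn_pos hM n).le ENNReal.toReal_nonneg
      have p2 : 0 ≤ Fn M G (n+1) x - Fn M G (n+1) g := by
        rw [Fn_sub G (n+1) hga]
        exact mul_nonneg (cnn_pos hM (n+1)).le ENNReal.toReal_nonneg
      have hgs : Fn M G (n+1) g = Fn M G n g := Fn_grid_stable hM hG n 1 k
      rw [Real.dist_eq, abs_le]
      have hbb := bb_pos hM n
      rw [← bb_eq_pow]
      constructor
      · nlinarith [hgs]
      · nlinarith [hgs]
    exact cauchySeq_tendsto_of_complete hc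
  exact ⟨fun x => (key x).choose, fun x => (key x).choose_spec⟩

section Fprops
variable {M : ℕ} {G : ℕ → ℤ → ℤ} (hM : 3 ≤ M) (hG : ∀ j k, (G j k) / (M:ℤ) = k)
  {F : ℝ → ℝ} (hF : ∀ x, Filter.Tendsto (fun n => Fn M G n x) Filter.atTop (nhds (F x)))
include hM hG hF

lemma F_mono : Monotone F := by
  intro a b hab
  have : ∀ n, Fn M G n a ≤ Fn M G n b := by
    intro n
    have h := Fn_sub (M := M) G n hab
    nlinarith [mul_nonneg (cnn_pos hM n).le (ENNReal.toReal_nonneg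
      (a := volume (CsO M G n ∩ Set.Ico a b)))]
  exact le_of_tendsto_of_tendsto' (hF a) (hF b) this

lemma F_window {j : ℕ} {a b : ℝ} (hab : a ≤ b) (hlen : b - a ≤ lp M j) :
    F b - F a ≤ 2 * bb M j := by
  apply le_of_tendsto ((hF b).sub (hF a))
  filter_upwards [Filter.eventually_ge_atTop j] with n hn
  exact Fn_window hM hG hn hab hlen

lemma F_lower {j : ℕ} {k : ℤ} {a b : ℝ} (hk : keep M G j k)
    (hsub : cellO M j k ⊆ Set.Ico a b) (hab : a ≤ b) :
    bb M j ≤ F b - F a := by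
  apply ge_of_tendsto ((hF b).sub (hF a))
  filter_upwards [Filter.eventually_ge_atTop j] with n hn
  exact Fn_lower hM hG hn hk hsub hab

lemma F_cell_zero {j : ℕ} {k : ℤ} (hk : ¬ keep M G j k) :
    F (((k:ℝ)+1) * lp M j) = F ((k:ℝ) * lp M j) := by
  have hab : (k:ℝ) * lp M j ≤ ((k:ℝ)+1) * lp M j := by
    nlinarith [lp_pos hM j]
  have hthis : ∀ m : ℕ, Fn M G (j+m) (((k:ℝ)+1) * lp M j) - Fn M G (j+m) ((k:ℝ) * lp M j) = 0 := by
    intro m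
    rw [Fn_sub G (j+m) hab]
    have : CsO M G (j+m) ∩ Set.Ico ((k:ℝ) * lp M j) (((k:ℝ)+1) * lp M j)
        = CsO M G (j+m) ∩ cellO M j k := rfl
    rw [this, vol_CsO_cellO hM hG m j k, if_neg hk]
    simp
  have h0 : Filter.Tendsto (fun n => Fn M G n (((k:ℝ)+1) * lp M j) - Fn M G n ((k:ℝ) * lp M j))
      Filter.atTop (nhds (F (((k:ℝ)+1) * lp M j) - F ((k:ℝ) * lp M j))) :=
    (hF _).sub (hF _)
  have h1 : Filter.Tendsto (fun n => Fn M G n (((k:ℝ)+1) * lp M j) - Fn M G n ((k:ℝ) * lp M j))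
      Filter.atTop (nhds 0) := by
    apply Filter.Tendsto.congr' _ tendsto_const_nhds
    filter_upwards [Filter.eventually_ge_atTop j] with n hn
    obtain ⟨m, rfl⟩ : ∃ m, n = j + m := ⟨n - j, by omega⟩
    exact (hthis m).symm
  have := tendsto_nhds_unique h0 h1
  linarith

lemma F_cont : Continuous F := by
  rw [Metric.continuous_iff]
  intro x ε hε
  have hr0 : (0:ℝ) ≤ ((M:ℝ)-1)⁻¹ := by have := M1_pos hM; positivity
  have hr1 : ((M:ℝ)-1)⁻¹ < 1 := by
    rw [inv_lt_one_iff₀]; right; linarith [Mr3 hM]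
  have htend : Filter.Tendsto (fun j : ℕ => 2 * bb M j) Filter.atTop (nhds 0) := by
    have := (tendsto_pow_atTop_nhds_zero_of_lt_one hr0 hr1).const_mul (2:ℝ)
    simpa [bb_eq_pow] using this
  obtain ⟨j, hj⟩ := (htend.eventually (gt_mem_nhds hε)).exists
  refine ⟨lp M j, lp_pos hM j, fun y hy => ?_⟩
  have key : ∀ u v : ℝ, u ≤ v → v - u ≤ lp M j → dist (F v) (F u) < ε := by
    intro u v huv hlen
    rw [Real.dist_eq, abs_of_nonneg (by linarith [F_mono hM hG hF huv])]
    calc F v - F u ≤ 2 * bb M j := F_window hM hG hF huv hlen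
      _ < ε := hj
  rcases le_total x y with h | h
  · exact key x y h (by rw [Real.dist_eq] at hy; rw [abs_of_nonneg (by linarith)] at hy; linarith)
  · rw [dist_comm]
    exact key y x h (by rw [Real.dist_eq] at hy; rw [abs_of_nonpos (by linarith)] at hy; linarith)

end Fprops

noncomputable def Xs (M : ℕ) (G : ℕ → ℤ → ℤ) : Set ℝ := ⋂ j, Cs M G j

lemma mem_Cs_iff {M : ℕ} {G : ℕ → ℤ → ℤ} {j : ℕ} {x : ℝ} :
    x ∈ Cs M G j ↔ ∃ k, keep M G j k ∧ x ∈ cell M j k := by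
  simp [Cs, Set.mem_iUnion]

lemma cell_child_subset {M : ℕ} (hM : 3 ≤ M) {j : ℕ} {k i : ℤ}
    (h1 : M * k ≤ i) (h2 : i + 1 ≤ M * k + M) :
    cell M (j+1) i ⊆ cell M j k := by
  have hL := lp_pos hM (j+1)
  have e1 : ((k:ℝ)) * lp M j ≤ (i:ℝ) * lp M (j+1) := by
    rw [← lp_succ hM j]
    have : ((M:ℝ) * k) ≤ (i:ℝ) := by exact_mod_cast h1
    nlinarith
  have e2 : ((i:ℝ)+1) * lp M (j+1) ≤ ((k:ℝ)+1) * lp M j := by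
    rw [← lp_succ hM j]
    have : ((i:ℝ)+1) ≤ (M:ℝ) * k + M := by exact_mod_cast h2
    nlinarith
  exact Set.Icc_subset_Icc e1 e2

lemma child_bounds {M : ℕ} (hM : 3 ≤ M) (i : ℤ) :
    (M:ℤ) * (i / (M:ℤ)) ≤ i ∧ i < (M:ℤ) * (i / (M:ℤ)) + M := by
  have hMz : (0:ℤ) < (M:ℤ) := by exact_mod_cast Nat.lt_of_lt_of_le (by norm_num) hM
  have h1 := Int.mul_ediv_add_emod i (M:ℤ)
  have h2 := Int.emod_nonneg i (ne_of_gt hMz)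
  have h3 := Int.emod_lt_of_pos i hMz
  omega

lemma Cs_succ_subset {M : ℕ} (G : ℕ → ℤ → ℤ) (hM : 3 ≤ M) (j : ℕ) :
    Cs M G (j+1) ⊆ Cs M G j := by
  intro x hx
  rw [mem_Cs_iff] at hx ⊢
  obtain ⟨i, hki, hxi⟩ := hx
  obtain ⟨hb1, hb2⟩ := child_bounds hM (M := M) i
  exact ⟨i / (M:ℤ), hki.1, cell_child_subset hM hb1 (by omega) hxi⟩

lemma Cs_anti {M : ℕ} (G : ℕ → ℤ → ℤ) (hM : 3 ≤ M) {i j : ℕ} (h : i ≤ j) :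
    Cs M G j ⊆ Cs M G i := by
  induction j with
  | zero => rw [Nat.le_zero.1 h]
  | succ j ih =>
    rcases Nat.lt_or_ge i (j+1) with h' | h'
    · exact (Cs_succ_subset G hM j).trans (ih (by omega))
    · have : i = j + 1 := by omega
      rw [this]

lemma Cs_closed {M : ℕ} (G : ℕ → ℤ → ℤ) (hM : 3 ≤ M) (j : ℕ) :
    IsClosed (Cs M G j) := by
  have hL := lp_pos hM j
  rw [← isOpen_compl_iff, isOpen_iff_mem_nhds]
  intro x hx
  set k := ⌊x / lp M j⌋ with hk
  have hka : (k:ℝ) * lp M j ≤ x := by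
    calc (k:ℝ) * lp M j ≤ (x / lp M j) * lp M j :=
          mul_le_mul_of_nonneg_right (Int.floor_le _) hL.le
      _ = x := by field_simp
  have hkb : x < ((k:ℝ)+1) * lp M j := by
    have h1 : x / lp M j < (k:ℝ) + 1 := Int.lt_floor_add_one _
    calc x = (x / lp M j) * lp M j := by field_simp
      _ < ((k:ℝ)+1) * lp M j := mul_lt_mul_of_pos_right h1 hL
  have hnk : ¬ keep M G j k := by
    intro hkp
    exact hx (mem_Cs_iff.2 ⟨k, hkp, hka, hkb.le⟩)
  have key : ∀ k' : ℤ, keep M G j k' → ∀ y ∈ cell M j k',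
      ∀ u v : ℤ, ((u:ℝ) * lp M j < y) → (y < (v:ℝ) * lp M j) → u < k' + 1 ∧ k' < v := by
    rintro k' _ y ⟨hy1, hy2⟩ u v hu hv
    constructor
    · have : (u:ℝ) * lp M j < ((k':ℝ)+1) * lp M j := lt_of_lt_of_le hu hy2
      have := lt_of_mul_lt_mul_right this hL.le
      exact_mod_cast this
    · have : (k':ℝ) * lp M j < (v:ℝ) * lp M j := lt_of_le_of_lt hy1 hv
      have := lt_of_mul_lt_mul_right this hL.le
      exact_mod_cast this
  rcases eq_or_lt_of_le hka with heq | hlt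
  · -- x is the left endpoint k * lp
    have hnk1 : ¬ keep M G j (k-1) := by
      intro hkp
      apply hx (mem_Cs_iff.2 ⟨k-1, hkp, ?_, ?_⟩)
      · push_cast
        nlinarith
      · push_cast
        nlinarith
    have hmem : Set.Ioo (((k:ℝ)-1) * lp M j) (((k:ℝ)+1) * lp M j) ∈ nhds x :=
      Ioo_mem_nhds (by nlinarith) hkb
    apply Filter.mem_of_superset hmem
    rintro y ⟨hy1, hy2⟩ hyC
    obtain ⟨k', hkp', hyc⟩ := mem_Cs_iff.1 hyC
    have hcast1 : ((k - 1 : ℤ):ℝ) = (k:ℝ) - 1 := by push_cast; ring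
    obtain ⟨c1, c2⟩ := key k' hkp' y hyc (k-1) (k+1) (by rw [hcast1]; exact hy1)
      (by push_cast; push_cast at hy2; linarith)
    have hk' : k' = k - 1 ∨ k' = k := by omega
    rcases hk' with rfl | rfl
    · exact hnk1 hkp'
    · exact hnk hkp'
  · have hmem : Set.Ioo ((k:ℝ) * lp M j) (((k:ℝ)+1) * lp M j) ∈ nhds x :=
      Ioo_mem_nhds hlt hkb
    apply Filter.mem_of_superset hmem
    rintro y ⟨hy1, hy2⟩ hyC
    obtain ⟨k', hkp', hyc⟩ := mem_Cs_iff.1 hyC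
    obtain ⟨c1, c2⟩ := key k' hkp' y hyc k (k+1) hy1 (by push_cast; push_cast at hy2; linarith)
    have : k' = k := by omega
    rw [this] at hkp'
    exact hnk hkp'

lemma Xs_closed {M : ℕ} (G : ℕ → ℤ → ℤ) (hM : 3 ≤ M) : IsClosed (Xs M G) :=
  isClosed_iInter (fun j => Cs_closed G hM j)

lemma exists_X_mem_cell {M : ℕ} {G : ℕ → ℤ → ℤ} (hM : 3 ≤ M) (hG : ∀ j k, (G j k) / (M:ℤ) = k)
    (j : ℕ) (k : ℤ) (hk : keep M G j k) :
    ∃ x ∈ Xs M G, x ∈ cell M j k := by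
  have hMz : (0:ℤ) < (M:ℤ) := by exact_mod_cast Nat.lt_of_lt_of_le (by norm_num) hM
  set nc : ℕ → ℤ → ℤ := fun j' k' => if G j' k' = M*k' then M*k' + 1 else M*k' with hnc
  have hnc_prop : ∀ j' k', keep M G j' k' →
      keep M G (j'+1) (nc j' k') ∧ M * k' ≤ nc j' k' ∧ nc j' k' + 1 ≤ M * k' + M := by
    intro j' k' hk'
    have hM2 : (2:ℤ) ≤ (M:ℤ) := by exact_mod_cast Nat.le_of_lt (Nat.lt_of_lt_of_le (by norm_num) hM)
    simp only [hnc]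
    split_ifs with hGk
    · refine ⟨?_, by omega, by omega⟩
      rw [keep_succ_iff M G (k := k') hM (by omega) (by omega)]
      exact ⟨hk', by omega⟩
    · refine ⟨?_, by omega, by omega⟩
      rw [keep_succ_iff M G (k := k') hM (by omega) (by omega)]
      exact ⟨hk', fun he => hGk he.symm⟩
  set seq : ℕ → ℤ := fun m => Nat.rec k (fun m' km => nc (j+m') km) m with hseq
  have hseq0 : seq 0 = k := rfl
  have hseqS : ∀ m, seq (m+1) = nc (j+m) (seq m) := fun m => rfl
  have hkeep : ∀ m, keep M G (j+m) (seq m) := by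
    intro m
    induction m with
    | zero => exact hk
    | succ m ih =>
      rw [hseqS]
      exact (hnc_prop (j+m) (seq m) ih).1
  have hsubS : ∀ m, cell M (j+m+1) (seq (m+1)) ⊆ cell M (j+m) (seq m) := by
    intro m
    obtain ⟨_, hb1, hb2⟩ := hnc_prop (j+m) (seq m) (hkeep m)
    rw [hseqS]
    exact cell_child_subset hM hb1 hb2
  have hchain : ∀ m m', m ≤ m' → cell M (j+m') (seq m') ⊆ cell M (j+m) (seq m) := by
    intro m m' h
    induction m' with
    | zero => rw [Nat.le_zero.1 h]
    | succ m' ih =>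
      rcases Nat.lt_or_ge m (m'+1) with h' | h'
      · exact (hsubS m').trans (ih (by omega))
      · have : m = m' + 1 := by omega
        rw [this]
  set a : ℕ → ℝ := fun m => (seq m : ℝ) * lp M (j+m) with ha
  have hamem : ∀ m, a m ∈ cell M (j+m) (seq m) := by
    intro m
    simp only [ha]
    exact ⟨le_rfl, by nlinarith [lp_pos hM (j+m)]⟩
  have hamem' : ∀ m m', m ≤ m' → a m' ∈ cell M (j+m) (seq m) :=
    fun m m' h => hchain m m' h (hamem m')
  have hcauchy : CauchySeq a := by
    apply cauchySeq_of_le_geometric ((M:ℝ))⁻¹ (lp M j) (by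
      rw [inv_lt_one_iff₀]; right; linarith [Mr3 hM])
    intro m
    have h1 := hamem m
    have h2 := hamem' m (m+1) (Nat.le_succ m)
    obtain ⟨p1, p2⟩ := h1
    obtain ⟨q1, q2⟩ := h2
    have hgeo : lp M (j+m) = lp M j * ((M:ℝ)⁻¹)^m := by
      rw [lp, lp, pow_add, mul_inv, inv_pow]
    rw [Real.dist_eq, abs_le]
    constructor
    · rw [← hgeo]; nlinarith [lp_pos hM (j+m)]
    · rw [← hgeo]; nlinarith [lp_pos hM (j+m)]
  obtain ⟨x, hx⟩ := cauchySeq_tendsto_of_complete hcauchy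
  have hxcell : ∀ m, x ∈ cell M (j+m) (seq m) := by
    intro m
    apply isClosed_Icc.mem_of_tendsto hx
    filter_upwards [Filter.eventually_ge_atTop m] with m' hm'
    exact hamem' m m' hm'
  refine ⟨x, ?_, by have := hxcell 0; rwa [Nat.add_zero] at this⟩
  rw [Xs, Set.mem_iInter]
  intro n
  rcases le_or_gt j n with h | h
  · obtain ⟨m, rfl⟩ : ∃ m, n = j + m := ⟨n - j, by omega⟩
    exact mem_Cs_iff.2 ⟨seq m, hkeep m, hxcell m⟩
  · apply Cs_anti G hM h.le
    have := hxcell 0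
    rw [Nat.add_zero] at this
    exact mem_Cs_iff.2 ⟨k, hk, this⟩

/-- every point lies in some generation-`j` cell, with strict right bound -/
lemma exists_cell_floor {M : ℕ} (hM : 3 ≤ M) (j : ℕ) (x : ℝ) :
    ∃ k : ℤ, (k:ℝ) * lp M j ≤ x ∧ x < ((k:ℝ)+1) * lp M j := by
  have hL := lp_pos hM j
  refine ⟨⌊x / lp M j⌋, ?_, ?_⟩
  · calc (⌊x / lp M j⌋:ℝ) * lp M j ≤ (x / lp M j) * lp M j :=
        mul_le_mul_of_nonneg_right (Int.floor_le _) hL.le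
      _ = x := by field_simp
  · have h1 : x / lp M j < (⌊x / lp M j⌋:ℝ) + 1 := Int.lt_floor_add_one _
    calc x = (x / lp M j) * lp M j := by field_simp
      _ < ((⌊x / lp M j⌋:ℝ)+1) * lp M j := mul_lt_mul_of_pos_right h1 hL

lemma cell_exists_child {M : ℕ} (hM : 3 ≤ M) {j : ℕ} {k : ℤ} {x : ℝ}
    (hx : x ∈ cell M j k) :
    ∃ i : ℤ, M*k ≤ i ∧ i < M*k + M ∧ x ∈ cell M (j+1) i := by
  have hL' := lp_pos hM (j+1)
  have hMk : ((M:ℤ)*k : ℝ) * lp M (j+1) = (k:ℝ) * lp M j := by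
    push_cast
    rw [← lp_succ hM j]
    ring
  have hMkM : (((M:ℤ)*k + M : ℤ) : ℝ) * lp M (j+1) = ((k:ℝ)+1) * lp M j := by
    push_cast
    rw [← lp_succ hM j]
    ring
  obtain ⟨hx1, hx2⟩ := hx
  rcases lt_or_ge x (((k:ℝ)+1) * lp M j) with hlt | hge
  · obtain ⟨i, hi1, hi2⟩ := exists_cell_floor hM (j+1) x
    refine ⟨i, ?_, ?_, hi1, hi2.le⟩
    · have : ((M:ℤ)*k : ℝ) * lp M (j+1) < ((i:ℝ)+1) * lp M (j+1) := by
        rw [hMk]; exact lt_of_le_of_lt hx1 hi2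
      have := lt_of_mul_lt_mul_right this hL'.le
      have : ((M:ℤ)*k : ℝ) < (i:ℝ) + 1 := this
      exact_mod_cast (by exact_mod_cast Int.lt_add_one_iff.1 (by exact_mod_cast this))
    · have : (i:ℝ) * lp M (j+1) < (((M:ℤ)*k + M : ℤ) : ℝ) * lp M (j+1) := by
        rw [hMkM]; exact lt_of_le_of_lt hi1 hlt
      have := lt_of_mul_lt_mul_right this hL'.le
      exact_mod_cast this
  · have hxe : x = ((k:ℝ)+1) * lp M j := le_antisymm hx2 hge
    refine ⟨M*k + M - 1, by omega, by omega, ?_, ?_⟩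
    · have : (((M:ℤ)*k + M - 1 : ℤ) : ℝ) * lp M (j+1) = ((k:ℝ)+1) * lp M j - lp M (j+1) := by
        push_cast
        rw [← lp_succ hM j]
        ring
      rw [this, hxe]
      linarith
    · have : ((((M:ℤ)*k + M - 1 : ℤ) : ℝ) + 1) * lp M (j+1) = ((k:ℝ)+1) * lp M j := by
        push_cast
        rw [← lp_succ hM j]
        ring
      rw [this, hxe]

lemma exists_scale {M : ℕ} (hM : 3 ≤ M) {t : ℝ} (ht : 1 ≤ t) :
    ∃ j : ℕ, (M:ℝ)^j ≤ t ∧ t < (M:ℝ)^(j+1) := by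
  have hM1 : (1:ℝ) < M := by linarith [Mr3 hM]
  have hM0 : (0:ℝ) < M := by linarith
  have ht0 : 0 < t := by linarith
  set j := ⌊Real.logb M t⌋₊ with hj
  have hlb0 : 0 ≤ Real.logb M t := Real.logb_nonneg hM1 ht
  refine ⟨j, ?_, ?_⟩
  · have h1 : (j:ℝ) ≤ Real.logb M t := Nat.floor_le hlb0
    have h2 : (M:ℝ)^(j:ℝ) ≤ (M:ℝ)^(Real.logb M t) :=
      Real.rpow_le_rpow_of_exponent_le hM1.le h1
    rwa [Real.rpow_logb hM0 (ne_of_gt hM1) ht0, Real.rpow_natCast] at h2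
  · have h1 : Real.logb M t < (j:ℝ) + 1 := Nat.lt_floor_add_one _
    have h2 : (M:ℝ)^(Real.logb M t) < (M:ℝ)^((j:ℝ)+1) :=
      Real.rpow_lt_rpow_of_exponent_lt hM1 h1
    rw [Real.rpow_logb hM0 (ne_of_gt hM1) ht0] at h2
    have : (M:ℝ)^((j:ℝ)+1) = (M:ℝ)^(j+1) := by
      rw [← Real.rpow_natCast (M:ℝ) (j+1)]
      push_cast
      ring_nf
    rwa [this] at h2

section delta
variable {M : ℕ} (hM : 3 ≤ M)
include hM

lemma delta_pos : 0 < Real.log ((M:ℝ)-1) / Real.log M := by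
  have h1 : (1:ℝ) < (M:ℝ) - 1 := by linarith [Mr3 hM]
  have h2 : (1:ℝ) < (M:ℝ) := by linarith [Mr3 hM]
  exact div_pos (Real.log_pos h1) (Real.log_pos h2)

lemma delta_lt_one : Real.log ((M:ℝ)-1) / Real.log M < 1 := by
  have h1 : (1:ℝ) < (M:ℝ) - 1 := by linarith [Mr3 hM]
  have h2 : (1:ℝ) < (M:ℝ) := by linarith [Mr3 hM]
  rw [div_lt_one (Real.log_pos h2)]
  exact Real.log_lt_log (by linarith) (by linarith)

lemma M_rpow_delta : (M:ℝ) ^ (Real.log ((M:ℝ)-1) / Real.log M) = (M:ℝ) - 1 := by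
  have h1 : (0:ℝ) < (M:ℝ) - 1 := M1_pos hM
  have h2 : (1:ℝ) < (M:ℝ) := by linarith [Mr3 hM]
  rw [Real.rpow_def_of_pos (by linarith)]
  rw [mul_comm, div_mul_cancel₀ _ (ne_of_gt (Real.log_pos h2)), Real.exp_log h1]

lemma bb_rpow (j : ℕ) : bb M j = lp M j ^ (Real.log ((M:ℝ)-1) / Real.log M) := by
  set δ := Real.log ((M:ℝ)-1) / Real.log M with hδ
  have hM0 : (0:ℝ) < M := M_pos hM
  have h1 : lp M j ^ δ = (((M:ℝ)^j) ^ δ)⁻¹ := by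
    rw [lp, Real.inv_rpow (by positivity)]
  have h2 : ((M:ℝ)^j : ℝ) ^ δ = ((M:ℝ) ^ δ)^j := by
    rw [← Real.rpow_natCast (M:ℝ) j, ← Real.rpow_mul hM0.le, mul_comm,
      Real.rpow_mul hM0.le, Real.rpow_natCast]
  rw [h1, h2, M_rpow_delta hM, bb]

end delta

end Porous43

set_option maxHeartbeats 1600000 in
open Porous43 in
/-- **Porous sets embed into neighborhoods of Ahlfors–David regular sets**
(Lemma 4.3 of the paper).  For each `ν ∈ (0,1)` there are `δ = δ(ν) ∈ (0,1)` and
`C_R = C_R(ν) ≥ 1` such that: if `0 < α₀ ≤ 1` and `Ω ⊆ ℝ` is `ν`-porous on scales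
`α₀` to `1`, then there is a set `X ⊆ ℝ`, `δ`-regular with constant `C_R` on scales
`0` to `1`, with `Ω ⊆ X(α₀) = X + [-α₀, α₀]`. -/
theorem porous_subset_neighborhood_of_regular
    (ν : ℝ) (hν : ν ∈ Set.Ioo (0:ℝ) 1) :
    ∃ δ ∈ Set.Ioo (0:ℝ) 1, ∃ C_R : ℝ, 1 ≤ C_R ∧
      ∀ α₀ : ℝ, 0 < α₀ → α₀ ≤ 1 → ∀ Ω : Set ℝ, IsPorous ν α₀ 1 Ω →
        ∃ X : Set ℝ, IsADRegular δ C_R 0 1 X ∧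
          Ω ⊆ {y : ℝ | ∃ x ∈ X, |y - x| ≤ α₀} := by
  classical
  obtain ⟨hν0, hν1⟩ := hν
  obtain ⟨M, hM, hMν⟩ : ∃ M : ℕ, 3 ≤ M ∧ 2 ≤ ν * M := by
    refine ⟨⌊2/ν⌋₊ + 1, ?_, ?_⟩
    · have h2 : (2:ℝ) ≤ 2/ν := by
        rw [le_div_iff₀ hν0]; linarith
      have : (2:ℕ) ≤ ⌊2/ν⌋₊ := Nat.le_floor (by exact_mod_cast h2)
      omega
    · have hfl : (2:ℝ)/ν < (⌊2/ν⌋₊ + 1 : ℕ) := by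
        push_cast
        exact Nat.lt_floor_add_one _
      rw [div_lt_iff₀ hν0] at hfl
      push_cast at hfl ⊢
      nlinarith
  have hMr := Mr3 hM
  have hM0 := M_pos hM
  set δ := Real.log ((M:ℝ)-1) / Real.log M with hδdef
  have hδ0 : 0 < δ := by rw [hδdef]; exact delta_pos hM
  have hδ1 : δ < 1 := by rw [hδdef]; exact delta_lt_one hM
  refine ⟨δ, ⟨hδ0, hδ1⟩, 2*M, by linarith, ?_⟩
  intro α₀ hα0 hα1 Ω hΩ
  -- the porosity gap choice
  have hporous : ∀ (j:ℕ) (k:ℤ), α₀ ≤ lp M j → ∃ c : ℝ, (k:ℝ) * lp M j ≤ c ∧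
      c + ν * lp M j ≤ ((k:ℝ)+1) * lp M j ∧ Set.Icc c (c + ν * lp M j) ∩ Ω = ∅ := by
    intro j k h
    have hb : ((k:ℝ)+1) * lp M j - (k:ℝ)*lp M j = lp M j := by ring
    obtain ⟨c, hc1, hc2, hc3⟩ := hΩ ((k:ℝ)*lp M j) (((k:ℝ)+1)*lp M j)
      (by rw [hb]; exact h) (by rw [hb]; exact lp_le_one hM j)
    rw [hb] at hc2 hc3
    exact ⟨c, hc1, hc2, hc3⟩
  set G : ℕ → ℤ → ℤ := fun j k =>
    if h : α₀ ≤ lp M j then ⌈(hporous j k h).choose * (M:ℝ)^(j+1)⌉ else M * k with hGdef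
  have hGkey : ∀ (j:ℕ) (k:ℤ), ((M:ℤ)*k ≤ G j k ∧ G j k < (M:ℤ)*k + M) ∧
      (α₀ ≤ lp M j → cell M (j+1) (G j k) ∩ Ω = ∅) := by
    intro j k
    by_cases h : α₀ ≤ lp M j
    · obtain ⟨hc1, hc2, hc3⟩ := (hporous j k h).choose_spec
      set c := (hporous j k h).choose with hc
      have hGval : G j k = ⌈c * (M:ℝ)^(j+1)⌉ := by
        rw [hGdef]; simp only [dif_pos h]; rfl
      set P : ℝ := (M:ℝ)^(j+1) with hP
      have hP0 : 0 < P := by positivity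
      have hlp1 : lp M (j+1) = P⁻¹ := rfl
      have hlpj : lp M j = (M:ℝ) * lp M (j+1) := (lp_succ hM j).symm
      have hgap2 : 2 * lp M (j+1) ≤ ν * lp M j := by
        rw [hlpj]
        have := lp_pos hM (j+1)
        nlinarith
      have hib1 : (((M:ℤ)*k : ℤ) : ℝ) ≤ c * P := by
        have h1 : (k:ℝ) * lp M j ≤ c := hc1
        rw [hlpj, hlp1] at h1
        have : (k:ℝ) * ((M:ℝ) * P⁻¹) * P ≤ c * P := mul_le_mul_of_nonneg_right h1 hP0.le
        calc (((M:ℤ)*k : ℤ) : ℝ) = (k:ℝ) * ((M:ℝ) * P⁻¹) * P := by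
              push_cast; field_simp <;> ring
          _ ≤ c * P := this
      have hib2 : c * P ≤ ((M:ℤ)*k + M - 2 : ℤ) := by
        have h2 : c + 2 * lp M (j+1) ≤ ((k:ℝ)+1) * lp M j := le_trans (by linarith [hgap2]) hc2
        rw [hlpj, hlp1] at h2
        have : (c + 2 * P⁻¹) * P ≤ ((k:ℝ)+1) * ((M:ℝ) * P⁻¹) * P :=
          mul_le_mul_of_nonneg_right h2 hP0.le
        have e1 : (c + 2 * P⁻¹) * P = c * P + 2 := by field_simp
        have e2 : ((k:ℝ)+1) * ((M:ℝ) * P⁻¹) * P = ((k:ℝ)+1) * M := by field_simp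
        rw [e1, e2] at this
        push_cast
        nlinarith
      have hup : G j k ≤ (M:ℤ)*k + M - 1 := by
        rw [hGval]
        have h9 : (⌈c * P⌉ : ℤ) ≤ (M:ℤ)*k + M - 2 := Int.ceil_le.2 hib2
        omega
      have hlo : (M:ℤ)*k ≤ G j k := by
        rw [hGval]
        have h9 := Int.ceil_mono hib1
        rwa [Int.ceil_intCast] at h9
      refine ⟨⟨hlo, by omega⟩, fun _ => ?_⟩
      -- the gap property
      have hsub : cell M (j+1) (G j k) ⊆ Set.Icc c (c + ν * lp M j) := by
        apply Set.Icc_subset_Icc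
        · rw [hGval, hlp1]
          have h1 : c * P ≤ (⌈c * P⌉ : ℝ) := Int.le_ceil _
          calc c = c * P * P⁻¹ := by field_simp
            _ ≤ (⌈c * P⌉ : ℝ) * P⁻¹ := mul_le_mul_of_nonneg_right h1 (by positivity)
        · rw [hGval, hlp1]
          have h1 : (⌈c * P⌉ : ℝ) < c * P + 1 := Int.ceil_lt_add_one _
          have h2 : ((⌈c * P⌉:ℝ) + 1) * P⁻¹ ≤ (c * P + 2) * P⁻¹ :=
            mul_le_mul_of_nonneg_right (by linarith) (by positivity)
          calc ((⌈c * P⌉:ℝ) + 1) * P⁻¹ ≤ (c * P + 2) * P⁻¹ := h2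
            _ = c + 2 * P⁻¹ := by field_simp
            _ ≤ c + ν * lp M j := by rw [← hlp1]; linarith [hgap2]
      rw [← Set.subset_empty_iff, ← hc3]
      exact Set.inter_subset_inter_left _ hsub
    · constructor
      · have : G j k = M * k := by rw [hGdef]; simp only [dif_neg h]
        rw [this]
        have : (0:ℤ) < (M:ℤ) := by exact_mod_cast Nat.lt_of_lt_of_le (by norm_num) hM
        omega
      · exact fun h' => absurd h' h
  have hG : ∀ (j:ℕ) (k:ℤ), (G j k) / (M:ℤ) = k := by
    intro j k
    obtain ⟨⟨h1, h2⟩, _⟩ := hGkey j k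
    exact ediv_eq_of_between hM h1 h2
  have hGap : ∀ (j:ℕ) (k:ℤ), α₀ ≤ lp M j → cell M (j+1) (G j k) ∩ Ω = ∅ :=
    fun j k h => (hGkey j k).2 h
  clear_value G
  clear hGkey hGdef hporous
  -- the limit function and measure
  obtain ⟨F, hF⟩ := exists_F hM hG
  have hFmono := F_mono hM hG hF
  have hFcont := F_cont hM hG hF
  set S : StieltjesFunction ℝ := ⟨F, hFmono, fun x => (hFcont.tendsto x).mono_left
    (nhdsWithin_le_nhds)⟩ with hSdef
  set μ : Measure ℝ := S.measure with hμdef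
  have hSF : (S : ℝ → ℝ) = F := rfl
  have hIcc : ∀ a b : ℝ, μ (Set.Icc a b) = ENNReal.ofReal (F b - F a) := by
    intro a b
    rw [hμdef, StieltjesFunction.measure_Icc]
    congr 1
    rw [hSF]
    congr 1
    exact leftLim_eq_of_tendsto
      ((hFcont.tendsto a).mono_left nhdsWithin_le_nhds)
  clear_value S μ
  refine ⟨Xs M G, ⟨Xs_closed G hM, ?_, μ, ?_, ?_, ?_⟩, ?_⟩
  · obtain ⟨x, hx, _⟩ := exists_X_mem_cell hM hG 0 0 trivial
    exact ⟨x, hx⟩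
  · -- μ Xᶜ = 0
    have hcover : (Xs M G)ᶜ ⊆ ⋃ (j:ℕ), ⋃ (k:ℤ), ⋃ (_ : ¬ keep M G j k), cell M j k := by
      intro x hx
      rw [Set.mem_compl_iff, Xs, Set.mem_iInter] at hx
      push_neg at hx
      obtain ⟨j, hj⟩ := hx
      obtain ⟨k, hk1, hk2⟩ := exists_cell_floor hM j x
      have hnk : ¬ keep M G j k := fun hkp => hj (mem_Cs_iff.2 ⟨k, hkp, hk1, hk2.le⟩)
      simp only [Set.mem_iUnion]
      exact ⟨j, k, hnk, hk1, hk2.le⟩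
    apply measure_mono_null hcover
    apply measure_iUnion_null
    intro j
    apply measure_iUnion_null
    intro k
    apply measure_iUnion_null
    intro hk
    rw [cell, hIcc, F_cell_zero hM hG hF hk, sub_self, ENNReal.ofReal_zero]
  · -- upper regularity
    intro a b h0 h1
    have hab : a ≤ b := by linarith
    rw [hIcc a b]
    apply ENNReal.ofReal_le_ofReal
    rcases eq_or_lt_of_le h0 with heq | hpos
    · have hba : b - a = 0 := by linarith
      have hFeq : F b = F a := by rw [show b = a by linarith]
      rw [hba, Real.zero_rpow (ne_of_gt hδ0), mul_zero, hFeq, sub_self]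
    · have hti : (1:ℝ) ≤ (b-a)⁻¹ := one_le_inv_iff₀.2 ⟨hpos, h1⟩
      obtain ⟨j, hj1, hj2⟩ := exists_scale hM hti
      have hMj0 : (0:ℝ) < (M:ℝ)^j := by positivity
      have hlen : b - a ≤ lp M j := by
        rw [Porous43.lp]
        have e1 : (b-a) * (b-a)⁻¹ = 1 := mul_inv_cancel₀ (ne_of_gt hpos)
        have e2 : (M:ℝ)^j * ((M:ℝ)^j)⁻¹ = 1 := mul_inv_cancel₀ (ne_of_gt hMj0)
        nlinarith
      have hlp : lp M j ≤ (M:ℝ) * (b - a) := by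
        rw [Porous43.lp]
        have h3 : (b-a)⁻¹ < (M:ℝ)^j * M := by
          rw [pow_succ] at hj2
          linarith
        have e1 : (b-a) * (b-a)⁻¹ = 1 := mul_inv_cancel₀ (ne_of_gt hpos)
        have e2 : (M:ℝ)^j * ((M:ℝ)^j)⁻¹ = 1 := mul_inv_cancel₀ (ne_of_gt hMj0)
        nlinarith
      have hW := F_window hM hG hF hab hlen
      have hbr : bb M j = lp M j ^ δ := by rw [hδdef]; exact bb_rpow hM j
      have hstep : lp M j ^ δ ≤ ((M:ℝ) * (b-a)) ^ δ :=
        Real.rpow_le_rpow (lp_nonneg M j) hlp hδ0.le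
      have hmul : ((M:ℝ) * (b-a)) ^ δ = (M:ℝ)^δ * (b-a)^δ :=
        Real.mul_rpow hM0.le hpos.le
      have hMd : (M:ℝ)^δ = (M:ℝ) - 1 := by rw [hδdef]; exact M_rpow_delta hM
      have hrnn : 0 ≤ (b-a)^δ := Real.rpow_nonneg hpos.le δ
      calc F b - F a ≤ 2 * bb M j := hW
        _ = 2 * lp M j ^ δ := by rw [hbr]
        _ ≤ 2 * ((M:ℝ)^δ * (b-a)^δ) := by rw [← hmul]; linarith
        _ = 2 * ((M:ℝ)-1) * (b-a)^δ := by rw [hMd]; ring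
        _ ≤ 2 * M * (b-a)^δ := by nlinarith
  · -- lower regularity
    intro x hx a b hmid h0 h1
    have hab : a ≤ b := by linarith
    rw [hIcc a b]
    apply ENNReal.ofReal_le_ofReal
    rcases eq_or_lt_of_le h0 with heq | hpos
    · rw [← heq, Real.zero_rpow (ne_of_gt hδ0), mul_zero]
      have := hFmono hab
      linarith
    · have h2M : (1:ℝ) ≤ 2 * M := by linarith
      have hti : (1:ℝ) ≤ 2/(b-a) := by
        rw [le_div_iff₀ hpos]; linarith
      obtain ⟨j, hj1, hj2⟩ := exists_scale hM hti
      have hMj1 : (0:ℝ) < (M:ℝ)^(j+1) := by positivity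
      have hup : lp M (j+1) ≤ (b-a)/2 := by
        rw [Porous43.lp]
        have e1 : ((b-a)/2) * (2/(b-a)) = 1 := by field_simp
        have e2 : (M:ℝ)^(j+1) * ((M:ℝ)^(j+1))⁻¹ = 1 := mul_inv_cancel₀ (ne_of_gt hMj1)
        nlinarith
      have hdown : (b-a)/(2*M) ≤ lp M (j+1) := by
        rw [Porous43.lp]
        have h3 : (M:ℝ)^(j+1) ≤ (M:ℝ) * (2/(b-a)) := by
          rw [pow_succ]
          nlinarith [pow_pos hM0 j]
        have e2 : (M:ℝ)^(j+1) * ((M:ℝ)^(j+1))⁻¹ = 1 := mul_inv_cancel₀ (ne_of_gt hMj1)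
        have h4 : (M:ℝ) * (2/(b-a)) = 2*M/(b-a) := by ring
        rw [h4] at h3
        have h5 : (0:ℝ) < ((M:ℝ)^(j+1))⁻¹ := by positivity
        have e3 : 2*(M:ℝ)/(b-a)*(b-a) = 2*M := by field_simp
        have h6 : (M:ℝ)^(j+1)*(b-a) ≤ 2*M := by
          calc (M:ℝ)^(j+1)*(b-a) ≤ (2*(M:ℝ)/(b-a))*(b-a) :=
              mul_le_mul_of_nonneg_right h3 hpos.le
            _ = 2*M := e3
        rw [div_le_iff₀ (by positivity : (0:ℝ) < 2*M)]
        calc b - a = ((M:ℝ)^(j+1) * ((M:ℝ)^(j+1))⁻¹) * (b-a) := by rw [e2]; ring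
          _ = ((M:ℝ)^(j+1))⁻¹ * ((M:ℝ)^(j+1) * (b-a)) := by ring
          _ ≤ ((M:ℝ)^(j+1))⁻¹ * (2*M) := mul_le_mul_of_nonneg_left h6 h5.le
      have hxC : x ∈ Cs M G (j+1) := by
        rw [Xs, Set.mem_iInter] at hx
        exact hx (j+1)
      obtain ⟨k, hkp, hxc⟩ := mem_Cs_iff.1 hxC
      obtain ⟨hxc1, hxc2⟩ := hxc
      have hLp := lp_pos hM (j+1)
      have hsub : cellO M (j+1) k ⊆ Set.Ico a b := by
        rintro y ⟨hy1, hy2⟩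
        constructor
        · have : (k:ℝ) * lp M (j+1) ≥ x - lp M (j+1) := by linarith
          have hxa : x = (a+b)/2 := hmid
          linarith [hup]
        · have : ((k:ℝ)+1) * lp M (j+1) ≤ x + lp M (j+1) := by linarith
          have hxa : x = (a+b)/2 := hmid
          linarith [hup]
      have hlow := F_lower hM hG hF hkp hsub hab
      have hbr : bb M (j+1) = lp M (j+1) ^ δ := by rw [hδdef]; exact bb_rpow hM (j+1)
      have hkey : (2*(M:ℝ))⁻¹ * (b-a)^δ ≤ lp M (j+1) ^ δ := by
        have h5 : ((b-a)/(2*M)) ^ δ ≤ lp M (j+1) ^ δ :=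
          Real.rpow_le_rpow (by positivity) hdown hδ0.le
        have h6 : ((b-a)/(2*M)) ^ δ = (b-a)^δ / (2*(M:ℝ))^δ :=
          Real.div_rpow hpos.le (by positivity) δ
        have h7 : (2*(M:ℝ))^δ ≤ 2*M := by
          have := Real.rpow_le_rpow_of_exponent_le h2M hδ1.le
          rwa [Real.rpow_one] at this
        have h8 : (b-a)^δ / (2*(M:ℝ)) ≤ (b-a)^δ / (2*(M:ℝ))^δ := by
          apply div_le_div_of_nonneg_left (Real.rpow_nonneg hpos.le δ) (by positivity) h7
        calc (2*(M:ℝ))⁻¹ * (b-a)^δ = (b-a)^δ / (2*(M:ℝ)) := by ring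
          _ ≤ (b-a)^δ / (2*(M:ℝ))^δ := h8
          _ = ((b-a)/(2*M)) ^ δ := h6.symm
          _ ≤ lp M (j+1) ^ δ := h5
      calc (2*(M:ℝ))⁻¹ * (b-a)^δ ≤ lp M (j+1) ^ δ := hkey
        _ = bb M (j+1) := hbr.symm
        _ ≤ F b - F a := hlow
  · -- coverage
    intro ω hω
    have hclaim : ∀ j : ℕ, (∀ i, i < j → α₀ ≤ lp M i) →
        ∃ k, keep M G j k ∧ ω ∈ cell M j k := by
      intro j
      induction j with
      | zero =>
        intro _
        refine ⟨⌊ω⌋, trivial, ?_⟩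
        rw [cell, lp_zero]
        constructor
        · rw [mul_one]; exact Int.floor_le ω
        · rw [mul_one]; linarith [Int.lt_floor_add_one ω]
      | succ j ih =>
        intro hsc
        obtain ⟨k, hkp, hkc⟩ := ih (fun i hi => hsc i (by omega))
        have hαj : α₀ ≤ lp M j := hsc j (by omega)
        obtain ⟨i, hi1, hi2, hic⟩ := cell_exists_child hM hkc
        have hiG : i ≠ G j k := by
          intro he
          have : ω ∈ cell M (j+1) (G j k) ∩ Ω := ⟨he ▸ hic, hω⟩
          rw [hGap j k hαj] at this
          exact this
        refine ⟨i, ?_, hic⟩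
        rw [keep_succ_iff M G (k := k) hM hi1 hi2]
        exact ⟨hkp, hiG⟩
    have hexJ : ∃ n : ℕ, lp M n < α₀ := by
      obtain ⟨n, hn⟩ := pow_unbounded_of_one_lt (α₀⁻¹) (by linarith : (1:ℝ) < M)
      refine ⟨n, ?_⟩
      rw [Porous43.lp]
      have h5 : (0:ℝ) < (M:ℝ)^n := by positivity
      have e1 : α₀ * α₀⁻¹ = 1 := mul_inv_cancel₀ (ne_of_gt hα0)
      have e2 : (M:ℝ)^n * ((M:ℝ)^n)⁻¹ = 1 := mul_inv_cancel₀ (ne_of_gt h5)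
      nlinarith
    set J := Nat.find hexJ with hJ
    have hJ1 : lp M J < α₀ := Nat.find_spec hexJ
    have hJ2 : ∀ i, i < J → α₀ ≤ lp M i := fun i hi => le_of_not_gt (Nat.find_min hexJ hi)
    obtain ⟨k, hkp, hkc⟩ := hclaim J hJ2
    obtain ⟨x, hxX, hxc⟩ := exists_X_mem_cell hM hG J k hkp
    refine ⟨x, hxX, ?_⟩
    obtain ⟨hw1, hw2⟩ := hkc
    obtain ⟨hx1, hx2⟩ := hxc
    have hLJ := lp_pos hM J
    rw [abs_le]
    constructor
    · nlinarith
    · nlinarith
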